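/- Let n ≥ 1 and let S_n(Sym_n) be the monoid presented by generators x_1,…,x_n and relations x_{σ(1)}x_{σ(2)}⋯x_{σ(n)} = x_1x_2⋯x_n for all σ ∈ Sym_n. Then the element x_ε = x_1x_2⋯x_n is central in S_n(Sym_n); in particular x_i·x_ε = x_ε·x_i holds in S_n(Sym_n) for every 1 ≤ i ≤ n. -/

import Mathlib

/-- The word `x_{σ(1)} x_{σ(2)} ⋯ x_{σ(n)}` in the free monoid on `n` generators
(generator `x_j` is indexed by `j-1 : Fin n`). -/
def permWord {n : ℕ} (σ : Equiv.Perm (Fin n)) : FreeMonoid (Fin n) :=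
  FreeMonoid.ofList (List.ofFn fun i => σ i)

/-- The word `x_ε = x_1 x_2 ⋯ x_n`. -/
def epsWord (n : ℕ) : FreeMonoid (Fin n) :=
  FreeMonoid.ofList (List.ofFn fun i : Fin n => i)

/-- The defining relations `x_{σ(1)} ⋯ x_{σ(n)} = x_1 ⋯ x_n`, `σ ∈ Sym_n`. -/
def symRel (n : ℕ) : FreeMonoid (Fin n) → FreeMonoid (Fin n) → Prop :=
  fun a b => ∃ σ : Equiv.Perm (Fin n), a = permWord σ ∧ b = epsWord n

/-- The canonical projection from the free monoid onto `S_n(Sym_n)`. -/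
def proj (n : ℕ) : FreeMonoid (Fin n) →* PresentedMonoid (symRel n) :=
  PresentedMonoid.mk (symRel n)

/-- `u` contains a subword of the form `x_{σ(1)} ⋯ x_{σ(n)}` for some `σ ∈ Sym_n`. -/
def HasPermSubword {n : ℕ} (u : FreeMonoid (Fin n)) : Prop :=
  ∃ (σ : Equiv.Perm (Fin n)) (a b : FreeMonoid (Fin n)), u = a * permWord σ * b

/-- The word `x_1^{m_1} · x_ε · x_2^{m_2} ⋯ x_n^{m_n}` (0-indexed: `m i` is the
exponent of generator `i`). -/
def normalWord (n : ℕ) (h : 0 < n) (m : Fin n → ℕ) : FreeMonoid (Fin n) :=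
  FreeMonoid.ofList (List.replicate (m ⟨0, h⟩) ⟨0, h⟩) * epsWord n *
    FreeMonoid.ofList (((List.finRange n).drop 1).flatMap fun i => List.replicate (m i) i)

/-- Every permutation word maps to `x_ε` in the presented monoid. -/
lemma proj_permWord {n : ℕ} (σ : Equiv.Perm (Fin n)) :
    proj n (permWord σ) = proj n (epsWord n) :=
  Quotient.sound (ConGen.Rel.of _ _ ⟨σ, rfl, rfl⟩)

/-- The key combinatorial identity on lists:
`i · (i+1)(i+2)⋯(i+n) = (i)(i+1)⋯(i+n-1) · i` (indices mod `n`). -/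
lemma cons_shift_eq {m : ℕ} (i : Fin (m+1)) :
    (i :: List.ofFn fun j : Fin (m+1) => i + 1 + j) =
      (List.ofFn fun j : Fin (m+1) => i + j) ++ [i] := by
  apply List.ext_getElem
  · simp
  · intro k h1 h2
    simp only [List.length_cons, List.length_ofFn] at h1
    rcases k with _ | k
    · simp
    · rw [List.getElem_cons_succ, List.getElem_ofFn]
      by_cases hk : k + 1 < m + 1
      · rw [List.getElem_append_left (by simpa using hk), List.getElem_ofFn]
        have : (⟨k+1, hk⟩ : Fin (m+1)) = ⟨k, by omega⟩ + 1 := by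
          apply Fin.ext
          rw [Fin.val_add_one_of_lt (by simp [Fin.lt_iff_val_lt_val, Fin.last]; omega)]
        rw [this]; abel
      · have hk' : k = m := by omega
        subst hk'
        rw [List.getElem_append_right (by simp)]
        simp only [List.length_ofFn, Nat.add_sub_cancel_left]
        rw [List.getElem_singleton]
        have : (⟨k, by omega⟩ : Fin (k+1)) = Fin.last k := rfl
        rw [this, add_assoc, add_comm 1 (Fin.last k), Fin.last_add_one, add_zero]

/-- Each generator commutes with `x_ε`. -/
lemma of_comm_eps {m : ℕ} (i : Fin (m + 1)) :
    proj (m+1) (FreeMonoid.of i) * proj (m+1) (epsWord (m+1)) =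
      proj (m+1) (epsWord (m+1)) * proj (m+1) (FreeMonoid.of i) := by
  have key : FreeMonoid.of i * permWord (Equiv.addLeft (i + 1)) =
      permWord (Equiv.addLeft i) * FreeMonoid.of i := by
    show FreeMonoid.ofList [i] * FreeMonoid.ofList _ = FreeMonoid.ofList _ * FreeMonoid.ofList [i]
    rw [← FreeMonoid.ofList_append, ← FreeMonoid.ofList_append]
    congr 1
    simp only [Equiv.coe_addLeft, List.singleton_append]
    exact cons_shift_eq i
  calc proj (m+1) (FreeMonoid.of i) * proj (m+1) (epsWord (m+1))
      = proj (m+1) (FreeMonoid.of i) * proj (m+1) (permWord (Equiv.addLeft (i+1))) := by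
        rw [proj_permWord]
    _ = proj (m+1) (FreeMonoid.of i * permWord (Equiv.addLeft (i+1))) := (map_mul _ _ _).symm
    _ = proj (m+1) (permWord (Equiv.addLeft i) * FreeMonoid.of i) := by rw [key]
    _ = proj (m+1) (permWord (Equiv.addLeft i)) * proj (m+1) (FreeMonoid.of i) := map_mul _ _ _
    _ = _ := by rw [proj_permWord]

/-- The element `x_ε = x_1 x_2 ⋯ x_n` is central in `S_n(Sym_n)`; in particular it commutes
with every generator `x_i`. -/
theorem epsWord_central (n : ℕ) (hn : 1 ≤ n) :
    (∀ a : PresentedMonoid (symRel n),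
        a * proj n (epsWord n) = proj n (epsWord n) * a) ∧
    (∀ i : Fin n,
        proj n (FreeMonoid.of i) * proj n (epsWord n) =
          proj n (epsWord n) * proj n (FreeMonoid.of i)) := by
  obtain _ | m := n
  · omega
  refine ⟨?_, of_comm_eps⟩
  intro a
  induction a with
  | _ w =>
    change proj (m+1) w * _ = _ * proj (m+1) w
    induction w using FreeMonoid.inductionOn with
    | one => rw [map_one, one_mul, mul_one]
    | of x => exact of_comm_eps x
    | mul x y hx hy =>
      rw [map_mul, mul_assoc, hy, ← mul_assoc, hx, mul_assoc]
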